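/- For every natural number m ≥ 2, the sequence of lower bounds L(m) = (2 + 2^m)^((m+1)/(2m)) / sqrt(4 + 2^(m+1)) is strictly decreasing in m. -/

import Mathlib

lemma key_ineq {m n : ℕ} (hm : 2 ≤ m) (hmn : m < n) :
    ((2:ℝ) + 2 ^ n) ^ m < ((2:ℝ) + 2 ^ m) ^ n := by
  have hm0 : (0:ℝ) < 2 ^ m := by positivity
  have hn0 : (0:ℝ) < 2 ^ n := by positivity
  have hab : (2:ℝ) ^ m < 2 ^ n := by
    exact pow_lt_pow_right₀ one_lt_two hmn
  have e1 : (2:ℝ) + 2 ^ n = 2 ^ n * (1 + 2 / 2 ^ n) := by field_simp; ring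
  have e2 : (2:ℝ) + 2 ^ m = 2 ^ m * (1 + 2 / 2 ^ m) := by field_simp; ring
  have hpow : ((2:ℝ) ^ n) ^ m = ((2:ℝ) ^ m) ^ n := by
    rw [← pow_mul, ← pow_mul, Nat.mul_comm]
  have hdiv : 2 / (2:ℝ) ^ n < 2 / 2 ^ m := by
    apply div_lt_div_of_pos_left (by norm_num) hm0 hab
  have hq : (0:ℝ) < 2 / 2 ^ m := by positivity
  have h1 : (1 + 2 / (2:ℝ) ^ n) ^ m < (1 + 2 / 2 ^ m) ^ m := by
    apply pow_lt_pow_left₀ (by linarith) (by positivity) (by omega)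
  have h2 : (1 + 2 / (2:ℝ) ^ m) ^ m ≤ (1 + 2 / 2 ^ m) ^ n := by
    apply pow_le_pow_right₀ (by linarith) (le_of_lt hmn)
  calc ((2:ℝ) + 2 ^ n) ^ m = ((2:ℝ) ^ m) ^ n * (1 + 2 / 2 ^ n) ^ m := by
        rw [e1, mul_pow, hpow]
    _ < ((2:ℝ) ^ m) ^ n * (1 + 2 / 2 ^ m) ^ n := by
        apply mul_lt_mul_of_pos_left (lt_of_lt_of_le h1 h2) (by positivity)
    _ = ((2:ℝ) + 2 ^ m) ^ n := by rw [e2, mul_pow]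

lemma f_eq (k : ℕ) (hk : 2 ≤ k) :
    (2 + (2:ℝ) ^ (k:ℝ)) ^ (((k:ℝ) + 1) / (2 * k)) /
      Real.sqrt (4 + 2 ^ ((k:ℝ) + 1))
    = (2 + (2:ℝ) ^ (k:ℝ)) ^ ((1:ℝ) / (2 * k)) / Real.sqrt 2 := by
  have hk0 : (0:ℝ) < (k:ℝ) := by
    have : 0 < k := by omega
    exact_mod_cast this
  have hX : (0:ℝ) < 2 + 2 ^ (k:ℝ) := by positivity
  have h1 : (4:ℝ) + 2 ^ ((k:ℝ) + 1) = 2 * (2 + 2 ^ (k:ℝ)) := by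
    rw [Real.rpow_add (by norm_num), Real.rpow_one]; ring
  rw [h1, Real.sqrt_mul (by norm_num), Real.sqrt_eq_rpow (2 + 2 ^ (k:ℝ)),
    mul_comm (Real.sqrt 2), ← div_div, ← Real.rpow_sub hX]
  congr 1
  field_simp
  ring

lemma rpow_key {m n : ℕ} (hm : 2 ≤ m) (hmn : m < n) :
    (2 + (2:ℝ) ^ (n:ℝ)) ^ ((1:ℝ) / (2 * n)) <
      (2 + (2:ℝ) ^ (m:ℝ)) ^ ((1:ℝ) / (2 * m)) := by
  have hm0 : (0:ℝ) < (m:ℝ) := by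
    have : 0 < m := by omega
    exact_mod_cast this
  have hn0 : (0:ℝ) < (n:ℝ) := by
    have : 0 < n := by omega
    exact_mod_cast this
  have hXn : (0:ℝ) < 2 + 2 ^ (n:ℝ) := by positivity
  have hXm : (0:ℝ) < 2 + 2 ^ (m:ℝ) := by positivity
  have hcast : ∀ k : ℕ, (2:ℝ) ^ (k:ℝ) = 2 ^ k := fun k => Real.rpow_natCast 2 k
  apply lt_of_pow_lt_pow_left₀ (2 * m * n) (by positivity)
  have hA : ((2 + (2:ℝ) ^ (n:ℝ)) ^ ((1:ℝ) / (2 * n))) ^ (2 * m * n)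
      = (2 + (2:ℝ) ^ n) ^ m := by
    rw [← Real.rpow_natCast ((2 + (2:ℝ) ^ (n:ℝ)) ^ ((1:ℝ) / (2 * n))) (2 * m * n),
      ← Real.rpow_mul hXn.le]
    rw [show (1:ℝ) / (2 * n) * ((2 * m * n : ℕ) : ℝ) = (m:ℝ) by
      push_cast; field_simp]
    rw [Real.rpow_natCast, hcast]
  have hB : ((2 + (2:ℝ) ^ (m:ℝ)) ^ ((1:ℝ) / (2 * m))) ^ (2 * m * n)
      = (2 + (2:ℝ) ^ m) ^ n := by
    rw [← Real.rpow_natCast ((2 + (2:ℝ) ^ (m:ℝ)) ^ ((1:ℝ) / (2 * m))) (2 * m * n),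
      ← Real.rpow_mul hXm.le]
    rw [show (1:ℝ) / (2 * m) * ((2 * m * n : ℕ) : ℝ) = (n:ℝ) by
      push_cast; field_simp]
    rw [Real.rpow_natCast, hcast]
  rw [hA, hB]
  exact key_ineq hm hmn

theorem stmt_17 :
    StrictAntiOn
      (fun m : ℕ =>
        (2 + (2:ℝ) ^ (m:ℝ)) ^ (((m:ℝ) + 1) / (2 * m)) /
          Real.sqrt (4 + 2 ^ ((m:ℝ) + 1)))
      (Set.Ici 2) := by
  intro m hm n hn hmn
  simp only [Set.mem_Ici] at hm hn
  simp only
  rw [f_eq m hm, f_eq n (by omega)]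
  have h := rpow_key hm hmn
  have hs : (0:ℝ) < Real.sqrt 2 := by positivity
  exact div_lt_div_of_pos_right h hs
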